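/- Under Assumptions A1 and A2, let (x̄, ȳ, λ̄) be an optimal primal–dual pair of the RMP, let ρ ≥ 1, and suppose for each session s: γ(s,λ̄) > 0, (1/ρ)·γ_ρ(s,λ̄) ≤ γ(s,λ̄) ≤ γ_ρ(s,λ̄), and γ_ρ(s,λ̄) = γ'(s,λ̄). Assume also x̄_s > m_s for all s (Assumption A3) and U_s(m_s) − m_s·U_s'(m_s) ≥ 0 for all s (Assumption A4). Then the RMP solution is a ρ-approximation of the MP: Σ_s U_s(x̄_s) ≤ Σ_s U_s(x_s*) ≤ ρ·Σ_s U_s(x̄_s). In particular, if ρ = 1 these inequalities hold with equality and x̄ is optimal to the MP. -/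

import Mathlib

open scoped BigOperators

lemma aux_sum_swap_mul {E T : Type} [Fintype E] [Fintype T]
    (lam : E → ℝ) (H : E → T → ℝ) (y : T → ℝ) :
    ∑ e, lam e * ∑ t, H e t * y t = ∑ t, (∑ e, H e t * lam e) * y t := by
  simp_rw [Finset.mul_sum, Finset.sum_mul]
  rw [Finset.sum_comm]
  exact Finset.sum_congr rfl fun t _ => Finset.sum_congr rfl fun e _ => by ring

lemma aux_sum_sigma_group {S T : Type} [Fintype S] [Fintype T] [DecidableEq S]
    (σ : T → S) (g : S → ℝ) (y : T → ℝ) :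
    ∑ s, g s * (∑ t, if σ t = s then y t else 0) = ∑ t, g (σ t) * y t := by
  simp_rw [Finset.mul_sum, mul_ite, mul_zero]
  rw [Finset.sum_comm]
  exact Finset.sum_congr rfl fun t _ => by simp [Finset.sum_ite_eq]

lemma aux_route_sum {S T : Type} [Fintype S] [Fintype T] [DecidableEq S] [DecidableEq T]
    (σ : T → S) (ts : S → T) (hts : ∀ s, σ (ts s) = s) (x : S → ℝ) (s0 : S) :
    ∑ t, (if σ t = s0 then (∑ s, if ts s = t then x s else 0) else 0) = x s0 := by
  have h1 : ∀ t, (if σ t = s0 then (∑ s, if ts s = t then x s else 0) else 0)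
      = ∑ s, if ts s = t ∧ σ t = s0 then x s else 0 := by
    intro t; by_cases h : σ t = s0 <;> simp [h]
  rw [Finset.sum_congr rfl fun t _ => h1 t, Finset.sum_comm]
  have h2 : ∀ s, (∑ t, if ts s = t ∧ σ t = s0 then x s else 0)
      = if s = s0 then x s else 0 := by
    intro s
    rw [Finset.sum_eq_single (ts s)]
    · simp [hts s]
    · intro b _ hb; simp [Ne.symm hb]
    · simp
  rw [Finset.sum_congr rfl fun s _ => h2 s]
  simp [Finset.sum_ite_eq']

lemma aux_route_cost {S T : Type} [Fintype S] [Fintype T] [DecidableEq T]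
    (ts : S → T) (cost : T → ℝ) (x : S → ℝ) :
    ∑ t, cost t * (∑ s, if ts s = t then x s else 0) = ∑ s, cost (ts s) * x s := by
  simp_rw [Finset.mul_sum, mul_ite, mul_zero]
  rw [Finset.sum_comm]
  exact Finset.sum_congr rfl fun s _ => by simp [Finset.sum_ite_eq]

/-- the RMP solution obtained by column generation with ρ-approximate
tree scheduling is a ρ-approximation of the MP; for ρ = 1 it is exactly optimal. -/
theorem rho_approximation_to_mp
    {S T E : Type} [Fintype S] [Fintype T] [Fintype E]
    [Nonempty S] [Nonempty T] [Nonempty E] [DecidableEq S] [DecidableEq T]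
    (σ : T → S) (hσ : Function.Surjective σ)
    (H : E → T → ℝ) (hH : ∀ e t, H e t = 0 ∨ H e t = 1)
    (c : E → ℝ) (hc : ∀ e, 0 < c e)
    (m M : S → ℝ) (hm : ∀ s, 0 ≤ m s) (hmM : ∀ s, m s < M s)
    (U : S → ℝ → ℝ)
    -- Assumption A1
    (hUmono : ∀ s, MonotoneOn (U s) (Set.Icc (m s) (M s)))
    (hUconc : ∀ s, StrictConcaveOn ℝ (Set.Icc (m s) (M s)) (U s))
    (hUdiff : ∀ s, ContDiffOn ℝ 1 (U s) (Set.Icc (m s) (M s)))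
    -- the domain D
    (D : Set ((S → ℝ) × (T → ℝ)))
    (hD : D = {p | (∀ t, 0 ≤ p.2 t) ∧
      (∀ s, p.1 s = ∑ t, if σ t = s then p.2 t else 0) ∧
      (∀ s, p.1 s ∈ Set.Icc (m s) (M s))})
    -- the Lagrangian
    (L : (S → ℝ) → (T → ℝ) → (E → ℝ) → ℝ)
    (hL : ∀ x y lam, L x y lam =
      ∑ s, U s (x s) + ∑ e, lam e * (c e - ∑ t, H e t * y t))
    -- the optimal value of the master problem
    (fStar : ℝ)
    (hfStar : IsGreatest {v | ∃ p ∈ D, (∀ e, ∑ t, H e t * p.2 t ≤ c e) ∧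
      v = ∑ s, U s (p.1 s)} fStar)
    -- the dual function
    (θ : (E → ℝ) → ℝ)
    (hθ : ∀ lam : E → ℝ, IsGreatest {v | ∃ p ∈ D, v = L p.1 p.2 lam} (θ lam))
    -- Assumption A2 (Slater)
    (hslater : ∃ p ∈ D, ∀ e, ∑ t, H e t * p.2 t < c e)
    -- the restricted tree set T', containing at least one tree of every session
    (T' : Finset T) (hT' : ∀ s, ∃ t ∈ T', σ t = s)
    -- the domain D' of the restricted master problem
    (D' : Set ((S → ℝ) × (T → ℝ)))
    (hD' : D' = {p | p ∈ D ∧ ∀ t ∉ T', p.2 t = 0})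
    -- the dual function of the RMP
    (θ' : (E → ℝ) → ℝ)
    (hθ' : ∀ lam : E → ℝ, IsGreatest {v | ∃ p ∈ D', v = L p.1 p.2 lam} (θ' lam))
    -- Assumption A2 (Slater) for the RMP
    (hslater' : ∃ p ∈ D', ∀ e, ∑ t, H e t * p.2 t < c e)
    -- (x̄, ȳ, λ̄) is an optimal primal–dual pair of the RMP
    (xbar : S → ℝ) (ybar : T → ℝ) (lambar : E → ℝ)
    (hlambar_nonneg : ∀ e, 0 ≤ lambar e)
    (hlambar_min : ∀ μ : E → ℝ, (∀ e, 0 ≤ μ e) → θ' lambar ≤ θ' μ)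
    (hbar_feas : (xbar, ybar) ∈ D' ∧ ∀ e, ∑ t, H e t * ybar t ≤ c e)
    (hbar_opt : ∀ p ∈ D', (∀ e, ∑ t, H e t * p.2 t ≤ c e) →
      ∑ s, U s (p.1 s) ≤ ∑ s, U s (xbar s))
    (hduality : ∑ s, U s (xbar s) = θ' lambar)
    -- the global and local minimum tree costs under λ̄
    (γbar γ'bar : S → ℝ)
    (hγbar : ∀ s, IsLeast {w | ∃ t, σ t = s ∧ w = ∑ e, H e t * lambar e} (γbar s))
    (hγ'bar : ∀ s,
      IsLeast {w | ∃ t ∈ T', σ t = s ∧ w = ∑ e, H e t * lambar e} (γ'bar s))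
    -- the approximation ratio ρ and the ρ-approximate tree costs at λ̄
    (ρ : ℝ) (hρ : 1 ≤ ρ) (γρ : S → ℝ)
    (hγpos : ∀ s, 0 < γbar s)
    (hγρ : ∀ s, (1 / ρ) * γρ s ≤ γbar s ∧ γbar s ≤ γρ s)
    -- the condition satisfied at convergence of column generation
    (hconv : ∀ s, γρ s = γ'bar s)
    -- Assumption A3
    (hA3 : ∀ s, m s < xbar s)
    -- Assumption A4
    (hA4 : ∀ s, 0 ≤ U s (m s) -
      m s * derivWithin (U s) (Set.Icc (m s) (M s)) (m s))
    -- x* is the unique optimal session-rate vector of the MP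
    (xstar : S → ℝ)
    (hxstar_opt : ∃ ystar : T → ℝ, (xstar, ystar) ∈ D ∧
      (∀ e, ∑ t, H e t * ystar t ≤ c e) ∧ ∑ s, U s (xstar s) = fStar)
    (hxstar_uniq : ∀ p ∈ D, (∀ e, ∑ t, H e t * p.2 t ≤ c e) →
      ∑ s, U s (p.1 s) = fStar → p.1 = xstar) :
    ∑ s, U s (xbar s) ≤ ∑ s, U s (xstar s) ∧
    ∑ s, U s (xstar s) ≤ ρ * ∑ s, U s (xbar s) ∧
    (ρ = 1 → ∑ s, U s (xbar s) = ∑ s, U s (xstar s)) := by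
  classical
  obtain ⟨hbarD', hbarfeas⟩ := hbar_feas
  have hρ0 : (0:ℝ) < ρ := lt_of_lt_of_le one_pos hρ
  -- unpack D'-membership of (xbar, ybar)
  have hbarD'' := hbarD'
  rw [hD'] at hbarD''
  obtain ⟨hbarD, hbarsupp⟩ := hbarD''
  have hbarD2 := hbarD
  rw [hD] at hbarD2
  obtain ⟨hybar_nonneg', hxbar_eq', hxbar_box'⟩ := hbarD2
  have hybar_nonneg : ∀ t, 0 ≤ ybar t := hybar_nonneg'
  have hxbar_eq : ∀ s, xbar s = ∑ t, if σ t = s then ybar t else 0 := hxbar_eq'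
  have hxbar_box : ∀ s, xbar s ∈ Set.Icc (m s) (M s) := hxbar_box'
  have hbarsupp2 : ∀ t ∉ T', ybar t = 0 := hbarsupp
  -- choose minimum-cost restricted trees
  have hchoice : ∀ s, ∃ t, t ∈ T' ∧ σ t = s ∧ γ'bar s = ∑ e, H e t * lambar e := by
    intro s
    obtain ⟨t, ht, hs, he⟩ := (hγ'bar s).1
    exact ⟨t, ht, hs, he⟩
  choose ts hts1 hts2 hts3 using hchoice
  -- basic facts
  have hcost_ge : ∀ t, γbar (σ t) ≤ ∑ e, H e t * lambar e :=
    fun t => (hγbar (σ t)).2 ⟨t, rfl, rfl⟩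
  have hcost_ge' : ∀ t ∈ T', γ'bar (σ t) ≤ ∑ e, H e t * lambar e :=
    fun t ht => (hγ'bar (σ t)).2 ⟨t, ht, rfl, rfl⟩
  have hγ'pos : ∀ s, 0 < γ'bar s :=
    fun s => lt_of_lt_of_le (hγpos s) ((hγρ s).2.trans_eq (hconv s))
  have hxbar_nonneg : ∀ s, 0 ≤ xbar s := fun s => (hm s).trans (hxbar_box s).1
  -- Lagrangian expansion
  have hLexp : ∀ (x : S → ℝ) (y : T → ℝ) (lam : E → ℝ), L x y lam
      = ∑ s, U s (x s) + ∑ e, lam e * c e - ∑ t, (∑ e, H e t * lam e) * y t := by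
    intro x y lam
    rw [hL, ← aux_sum_swap_mul lam H y]
    simp_rw [mul_sub]
    rw [Finset.sum_sub_distrib]
    ring
  -- routed points belong to D'
  have hroute_mem : ∀ x : S → ℝ, (∀ s, x s ∈ Set.Icc (m s) (M s)) →
      ((x, fun t => ∑ s, if ts s = t then x s else 0) : (S → ℝ) × (T → ℝ)) ∈ D' := by
    intro x hx
    rw [hD']
    constructor
    · rw [hD]
      refine ⟨?_, ?_, hx⟩
      · intro t
        apply Finset.sum_nonneg
        intro s _
        split
        · exact (hm s).trans (hx s).1
        · exact le_rfl
      · intro s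
        exact (aux_route_sum σ ts hts2 x s).symm
    · intro t ht
      apply Finset.sum_eq_zero
      intro s _
      rw [if_neg]
      intro h
      exact ht (h ▸ hts1 s)
  -- value of Lagrangian at routed points
  have hLroute : ∀ x : S → ℝ,
      L x (fun t => ∑ s, if ts s = t then x s else 0) lambar
        = ∑ s, U s (x s) + ∑ e, lambar e * c e - ∑ s, γ'bar s * x s := by
    intro x
    rw [hLexp]
    have := aux_route_cost ts (fun t => ∑ e, H e t * lambar e) x
    rw [this]
    have : ∑ s, (∑ e, H e (ts s) * lambar e) * x s = ∑ s, γ'bar s * x s :=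
      Finset.sum_congr rfl fun s _ => by rw [← hts3 s]
    rw [this]
  have hθ'ub : ∀ p ∈ D', L p.1 p.2 lambar ≤ θ' lambar :=
    fun p hp => (hθ' lambar).2 ⟨p, hp, rfl⟩
  -- complementary slackness, ≤ direction
  have hCSle : ∑ e, lambar e * c e ≤ ∑ s, γ'bar s * xbar s := by
    have h := hθ'ub (xbar, fun t => ∑ s, if ts s = t then xbar s else 0)
      (hroute_mem xbar hxbar_box)
    simp only at h
    rw [hLroute xbar, ← hduality] at h
    linarith
  -- complementary slackness, ≥ direction
  have hCSge : ∑ s, γ'bar s * xbar s ≤ ∑ e, lambar e * c e := by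
    have h0 : 0 ≤ ∑ e, lambar e * (c e - ∑ t, H e t * ybar t) :=
      Finset.sum_nonneg fun e _ =>
        mul_nonneg (hlambar_nonneg e) (sub_nonneg.2 (hbarfeas e))
    have h1 : ∑ e, lambar e * (c e - ∑ t, H e t * ybar t)
        = ∑ e, lambar e * c e - ∑ t, (∑ e, H e t * lambar e) * ybar t := by
      rw [← aux_sum_swap_mul lambar H ybar]
      simp_rw [mul_sub]
      rw [Finset.sum_sub_distrib]
    have h2 : ∑ t, γ'bar (σ t) * ybar t ≤ ∑ t, (∑ e, H e t * lambar e) * ybar t := by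
      apply Finset.sum_le_sum
      intro t _
      by_cases ht : t ∈ T'
      · exact mul_le_mul_of_nonneg_right (hcost_ge' t ht) (hybar_nonneg t)
      · rw [hbarsupp2 t ht, mul_zero, mul_zero]
    have h3 : ∑ s, γ'bar s * xbar s = ∑ t, γ'bar (σ t) * ybar t := by
      rw [← aux_sum_sigma_group σ γ'bar ybar]
      exact Finset.sum_congr rfl fun s _ => by rw [hxbar_eq s]
    linarith
  -- xbar s maximizes U s x - γ'bar s * x over [m s, M s]
  have hmax : ∀ s0, ∀ x0 ∈ Set.Icc (m s0) (M s0),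
      U s0 x0 - γ'bar s0 * x0 ≤ U s0 (xbar s0) - γ'bar s0 * xbar s0 := by
    intro s0 x0 hx0
    set x' : S → ℝ := Function.update xbar s0 x0 with hx'
    have hx'mem : ∀ s, x' s ∈ Set.Icc (m s) (M s) := by
      intro s
      by_cases h : s = s0
      · subst h; simpa [hx'] using hx0
      · simpa [hx', Function.update_of_ne h] using hxbar_box s
    have h1 := hθ'ub (x', fun t => ∑ s, if ts s = t then x' s else 0)
      (hroute_mem x' hx'mem)
    simp only at h1
    rw [hLroute x', ← hduality] at h1
    have e1 : ∑ s, U s (x' s) - ∑ s, U s (xbar s) = U s0 x0 - U s0 (xbar s0) := by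
      rw [← Finset.sum_sub_distrib]
      rw [Finset.sum_eq_single s0]
      · simp [hx']
      · intro b _ hb; simp [hx', Function.update_of_ne hb]
      · simp
    have e2 : ∑ s, γ'bar s * x' s - ∑ s, γ'bar s * xbar s
        = γ'bar s0 * x0 - γ'bar s0 * xbar s0 := by
      rw [← Finset.sum_sub_distrib]
      rw [Finset.sum_eq_single s0]
      · simp [hx']
      · intro b _ hb; simp [hx', Function.update_of_ne hb]
      · simp
    linarith
  -- key per-session inequality: γ'bar s * xbar s ≤ U s (xbar s)
  have hkey : ∀ s, γ'bar s * xbar s ≤ U s (xbar s) := by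
    intro s
    have hm_mem : m s ∈ Set.Icc (m s) (M s) := ⟨le_rfl, (hmM s).le⟩
    have hdiffm : DifferentiableWithinAt ℝ (U s) (Set.Icc (m s) (M s)) (m s) :=
      ((hUdiff s).differentiableOn one_ne_zero) (m s) hm_mem
    have hslope := (hUconc s).concaveOn.slope_le_derivWithin hm_mem (hxbar_box s)
      (hA3 s) hdiffm
    rw [slope_def_field] at hslope
    have hpos : 0 < xbar s - m s := sub_pos.2 (hA3 s)
    rw [div_le_iff₀ hpos] at hslope
    have hmaxm := hmax s (m s) hm_mem
    have hγ'd : γ'bar s ≤ derivWithin (U s) (Set.Icc (m s) (M s)) (m s) := by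
      have h1 : γ'bar s * (xbar s - m s) ≤
          derivWithin (U s) (Set.Icc (m s) (M s)) (m s) * (xbar s - m s) := by
        nlinarith [hmaxm, hslope]
      exact le_of_mul_le_mul_right h1 hpos
    have hA4s := hA4 s
    nlinarith [mul_le_mul_of_nonneg_left hγ'd (hm s)]
  -- Part 1 : ∑ U (xbar) ≤ fStar
  have hpart1 : ∑ s, U s (xbar s) ≤ fStar :=
    hfStar.2 ⟨(xbar, ybar), hbarD, hbarfeas, rfl⟩
  obtain ⟨ystar, hstD, hstfeas, hstval⟩ := hxstar_opt
  -- Part 2 : fStar ≤ ρ * ∑ U (xbar)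
  set lam2 : E → ℝ := fun e => ρ * lambar e with hlam2
  have hwd : fStar ≤ θ lam2 := by
    obtain ⟨q, hqD, hqfeas, hqval⟩ := hfStar.1
    have h0 : fStar ≤ L q.1 q.2 lam2 := by
      rw [hL]
      have hnn : 0 ≤ ∑ e, lam2 e * (c e - ∑ t, H e t * q.2 t) :=
        Finset.sum_nonneg fun e _ =>
          mul_nonneg (mul_nonneg hρ0.le (hlambar_nonneg e))
            (sub_nonneg.2 (hqfeas e))
      linarith [hqval.le]
    exact h0.trans ((hθ lam2).2 ⟨q, hqD, rfl⟩)
  obtain ⟨⟨p, hpD, hpL⟩, _⟩ := hθ lam2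
  have hpD2 := hpD
  rw [hD] at hpD2
  obtain ⟨hp_ynn, hp_xeq, hp_box⟩ := hpD2
  have hp_xnn : ∀ s, 0 ≤ p.1 s := fun s => (hm s).trans (hp_box s).1
  rw [hLexp] at hpL
  have hc2 : ∑ e, lam2 e * c e = ρ * ∑ e, lambar e * c e := by
    rw [Finset.mul_sum]
    exact Finset.sum_congr rfl fun e _ => by simp [hlam2]; ring
  have hcost2 : ∑ t, (∑ e, H e t * lam2 e) * p.2 t
      = ρ * ∑ t, (∑ e, H e t * lambar e) * p.2 t := by
    rw [Finset.mul_sum]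
    refine Finset.sum_congr rfl fun t _ => ?_
    have : ∑ e, H e t * lam2 e = ρ * ∑ e, H e t * lambar e := by
      rw [Finset.mul_sum]
      exact Finset.sum_congr rfl fun e _ => by simp [hlam2]; ring
    rw [this]; ring
  have hA : ∑ t, γbar (σ t) * p.2 t ≤ ∑ t, (∑ e, H e t * lambar e) * p.2 t :=
    Finset.sum_le_sum fun t _ =>
      mul_le_mul_of_nonneg_right (hcost_ge t) (hp_ynn t)
  have hB : ∑ t, γbar (σ t) * p.2 t = ∑ s, γbar s * p.1 s := by
    rw [← aux_sum_sigma_group σ γbar p.2]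
    exact Finset.sum_congr rfl fun s _ => by rw [hp_xeq s]
  have hC : ∑ s, γ'bar s * p.1 s ≤ ρ * ∑ s, γbar s * p.1 s := by
    rw [Finset.mul_sum]
    apply Finset.sum_le_sum
    intro s _
    have h1 : γ'bar s ≤ ρ * γbar s := by
      have h := (hγρ s).1
      rw [hconv s] at h
      have h2 := mul_le_mul_of_nonneg_left h hρ0.le
      rw [← mul_assoc, mul_one_div, div_self hρ0.ne', one_mul] at h2
      exact h2
    calc γ'bar s * p.1 s ≤ (ρ * γbar s) * p.1 s :=
          mul_le_mul_of_nonneg_right h1 (hp_xnn s)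
      _ = ρ * (γbar s * p.1 s) := by ring
  have hDD : ∑ s, (U s (p.1 s) - γ'bar s * p.1 s)
      ≤ ∑ s, (U s (xbar s) - γ'bar s * xbar s) :=
    Finset.sum_le_sum fun s _ => hmax s (p.1 s) (hp_box s)
  have hF : ∑ s, γ'bar s * xbar s ≤ ∑ s, U s (xbar s) :=
    Finset.sum_le_sum fun s _ => hkey s
  simp only [Finset.sum_sub_distrib] at hDD
  have hpart2 : fStar ≤ ρ * ∑ s, U s (xbar s) := by
    have h1 : θ lam2 ≤ ρ * ∑ s, U s (xbar s) := by
      rw [hpL, hc2, hcost2]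
      have h2 : ρ * (∑ t, γbar (σ t) * p.2 t) ≤
          ρ * ∑ t, (∑ e, H e t * lambar e) * p.2 t :=
        mul_le_mul_of_nonneg_left hA hρ0.le
      rw [hB] at h2
      have h3 : ρ * (∑ e, lambar e * c e) ≤ ρ * ∑ s, γ'bar s * xbar s :=
        mul_le_mul_of_nonneg_left hCSle hρ0.le
      have h4 : (ρ - 1) * (∑ s, γ'bar s * xbar s) ≤ (ρ - 1) * ∑ s, U s (xbar s) :=
        mul_le_mul_of_nonneg_left hF (by linarith)
      linarith [hC]
    linarith
  refine ⟨by rw [hstval]; exact hpart1, by rw [hstval]; exact hpart2, ?_⟩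
  intro hρ1
  rw [hstval]
  have := hpart2
  rw [hρ1, one_mul] at this
  linarith
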